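/- Let X be a real normed vector space and θ = (k_r) a lacunary sequence. Then X is complete (i.e. a Banach space) if and only if for every weakly unconditionally Cauchy series ∑ x_i in X, the space S_{S_θ}(∑ x_i) = {(a_i) ∈ ℓ_∞ : the partial sums of ∑ a_i x_i are S_θ-summable}, endowed with the supremum norm, is complete. -/

import Mathlib

open Filter Finset
open scoped Classical

/-- `θ` is a lacunary sequence: `θ 0 = 0`, `θ` is strictly increasing and
`h_r = θ (r+1) - θ r → ∞`.  (Intervals `I_r = (θ r, θ (r+1)]`.) -/
def IsLacunary (θ : ℕ → ℕ) : Prop :=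
  θ 0 = 0 ∧ StrictMono θ ∧ Tendsto (fun r => θ (r + 1) - θ r) atTop atTop

/-- `x` is strongly lacunary (`N_θ`) summable to `L`. -/
def NthetaSummable {X : Type*} [NormedAddCommGroup X] (θ : ℕ → ℕ) (x : ℕ → X) (L : X) : Prop :=
  Tendsto (fun r => (1 / (θ (r + 1) - θ r : ℝ)) * ∑ k ∈ Finset.Ioc (θ r) (θ (r + 1)), ‖x k - L‖)
    atTop (nhds 0)

/-- `x` is lacunary statistically (`S_θ`) convergent to `L`. -/
def SthetaConvergent {X : Type*} [NormedAddCommGroup X] (θ : ℕ → ℕ) (x : ℕ → X) (L : X) : Prop :=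
  ∀ ε > (0 : ℝ),
    Tendsto (fun r => (1 / (θ (r + 1) - θ r : ℝ)) *
      (((Finset.Ioc (θ r) (θ (r + 1))).filter (fun k => ε ≤ ‖x k - L‖)).card : ℝ))
      atTop (nhds 0)

/-- The series `∑ x i` is weakly unconditionally Cauchy: `∑ |f (x i)| < ∞`
for every continuous linear functional `f`. -/
def WUCSeries {X : Type*} [NormedAddCommGroup X] [NormedSpace ℝ X] (x : ℕ → X) : Prop :=
  ∀ f : X →L[ℝ] ℝ, Summable fun i => |f (x i)|

/-- The `S_θ`-summability space of the series `∑ x i`, viewed as a subset of `ℓ∞`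
(with the supremum norm): bounded scalar sequences `a` for which the partial sums of
`∑ a i • x i` are `S_θ`-convergent to some element of `X`. -/
def SthetaSummabilitySpace {X : Type*} [NormedAddCommGroup X] [NormedSpace ℝ X]
    (θ : ℕ → ℕ) (x : ℕ → X) : Set (lp (fun _ : ℕ => ℝ) ⊤) :=
  {a | ∃ L : X, SthetaConvergent θ (fun n => ∑ i ∈ Finset.range n, a i • x i) L}

section Aux

variable {X : Type*} [NormedAddCommGroup X]

lemma hr_pos {θ : ℕ → ℕ} (hθ : StrictMono θ) (r : ℕ) :
    (0:ℝ) < (θ (r+1) - θ r : ℝ) := by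
  have := hθ (Nat.lt_succ_self r)
  have : (θ r : ℝ) < θ (r+1) := by exact_mod_cast this
  linarith

lemma exists_good {θ : ℕ → ℕ} (hθ : IsLacunary θ) (p q : ℕ → Prop)
    (hp : Tendsto (fun r => (1 / (θ (r + 1) - θ r : ℝ)) *
      (((Finset.Ioc (θ r) (θ (r + 1))).filter p).card : ℝ)) atTop (nhds 0))
    (hq : Tendsto (fun r => (1 / (θ (r + 1) - θ r : ℝ)) *
      (((Finset.Ioc (θ r) (θ (r + 1))).filter q).card : ℝ)) atTop (nhds 0))
    (N : ℕ) : ∃ k, N ≤ k ∧ ¬ p k ∧ ¬ q k := by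
  obtain ⟨-, hmono, -⟩ := hθ
  have e1 := hp.eventually (gt_mem_nhds (by norm_num : (0:ℝ) < 1/2))
  have e2 := hq.eventually (gt_mem_nhds (by norm_num : (0:ℝ) < 1/2))
  have e3 : ∀ᶠ r in atTop, N ≤ θ r := by
    filter_upwards [eventually_ge_atTop N] with r hr
    exact le_trans hr hmono.le_apply
  obtain ⟨r, ⟨h1, h2⟩, h3⟩ := ((e1.and e2).and e3).exists
  set I := Finset.Ioc (θ r) (θ (r + 1)) with hI
  have hpos := hr_pos hmono r
  have hle : θ r ≤ θ (r+1) := (hmono (Nat.lt_succ_self r)).le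
  have hcard : (I.card : ℝ) = (θ (r+1) - θ r : ℝ) := by
    rw [hI, Nat.card_Ioc, Nat.cast_sub hle]
  have hltp : ((I.filter p).card : ℝ) < (θ (r+1) - θ r : ℝ) / 2 := by
    rw [one_div_mul_eq_div, div_lt_iff₀ hpos] at h1
    linarith
  have hltq : ((I.filter q).card : ℝ) < (θ (r+1) - θ r : ℝ) / 2 := by
    rw [one_div_mul_eq_div, div_lt_iff₀ hpos] at h2
    linarith
  have hlt : ((I.filter fun k => p k ∨ q k).card : ℝ) < (I.card : ℝ) := by
    calc ((I.filter fun k => p k ∨ q k).card : ℝ)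
        ≤ ((I.filter p).card : ℝ) + ((I.filter q).card : ℝ) := by
          rw [Finset.filter_or]
          exact_mod_cast Finset.card_union_le _ _
      _ < (I.card : ℝ) := by rw [hcard]; linarith
  obtain ⟨k, hkI, hk⟩ : ∃ k ∈ I, ¬(p k ∨ q k) := by
    by_contra hcon
    push_neg at hcon
    have : I.filter (fun k => p k ∨ q k) = I := Finset.filter_eq_self.2 hcon
    rw [this] at hlt
    exact lt_irrefl _ hlt
  push_neg at hk
  exact ⟨k, le_trans h3 (Finset.mem_Ioc.1 hkI).1.le, hk.1, hk.2⟩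

lemma tendsto_of_stheta_of_cauchy {θ : ℕ → ℕ} (hθ : IsLacunary θ) {P : ℕ → X} {L : X}
    (hP : SthetaConvergent θ P L) (hC : CauchySeq P) : Tendsto P atTop (nhds L) := by
  rw [Metric.tendsto_atTop]
  intro ε hε
  obtain ⟨N, hN⟩ := Metric.cauchySeq_iff.1 hC (ε/2) (by positivity)
  obtain ⟨k, hkN, hk, -⟩ := exists_good hθ _ _ (hP (ε/2) (by positivity)) (hP (ε/2) (by positivity)) N
  refine ⟨N, fun n hn => ?_⟩
  push_neg at hk
  calc dist (P n) L ≤ dist (P n) (P k) + dist (P k) L := dist_triangle _ _ _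
    _ < ε/2 + ε/2 := by
        refine add_lt_add (hN n hn k hkN) ?_
        rw [dist_eq_norm]; exact hk
    _ = ε := by ring

lemma stheta_of_eventually_eq {θ : ℕ → ℕ} (hθ : IsLacunary θ) {P : ℕ → X} {L : X}
    (h : ∀ᶠ k in atTop, P k = L) : SthetaConvergent θ P L := by
  intro ε hε
  obtain ⟨N, hN⟩ := eventually_atTop.1 h
  have hev : ∀ᶠ r in atTop, (1 / (θ (r + 1) - θ r : ℝ)) *
      (((Finset.Ioc (θ r) (θ (r + 1))).filter (fun k => ε ≤ ‖P k - L‖)).card : ℝ) = 0 := by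
    filter_upwards [eventually_ge_atTop N] with r hr
    have : (Finset.Ioc (θ r) (θ (r + 1))).filter (fun k => ε ≤ ‖P k - L‖) = ∅ := by
      rw [Finset.filter_eq_empty_iff]
      intro k hkI
      have hk : N ≤ k :=
        le_trans (le_trans hr hθ.2.1.le_apply) (Finset.mem_Ioc.1 hkI).1.le
      rw [hN k hk, sub_self, norm_zero]
      exact not_le.2 hε
    rw [this]
    simp
  exact Tendsto.congr' (hev.mono fun r hr => hr.symm) tendsto_const_nhds

lemma wuc_bound {X : Type*} [NormedAddCommGroup X] [NormedSpace ℝ X] {x : ℕ → X}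
    (hx : WUCSeries x) :
    ∃ H : ℝ, 0 ≤ H ∧ ∀ (b : ℕ → ℝ) (k : ℕ) (C : ℝ), 0 ≤ C → (∀ i, |b i| ≤ C) →
      ‖∑ i ∈ Finset.range k, b i • x i‖ ≤ H * C := by
  set ι := {b : ℕ → ℝ // ∀ i, |b i| ≤ 1} × ℕ with hι
  set g : ι → StrongDual ℝ X →L[ℝ] ℝ := fun p =>
    NormedSpace.inclusionInDoubleDual ℝ X (∑ i ∈ Finset.range p.2, p.1.1 i • x i) with hg
  have hbdd : ∀ f : StrongDual ℝ X, ∃ C, ∀ p : ι, ‖g p f‖ ≤ C := by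
    intro f
    refine ⟨∑' i, |f (x i)|, ?_⟩
    rintro ⟨⟨b, hb⟩, k⟩
    have h1 : g (⟨b, hb⟩, k) f = ∑ i ∈ Finset.range k, b i * f (x i) := by
      simp [hg, NormedSpace.dual_def, map_sum, map_smul, smul_eq_mul]
    rw [h1]
    calc ‖∑ i ∈ Finset.range k, b i * f (x i)‖
        ≤ ∑ i ∈ Finset.range k, ‖b i * f (x i)‖ := norm_sum_le _ _
      _ ≤ ∑ i ∈ Finset.range k, |f (x i)| := by
          refine Finset.sum_le_sum fun i _ => ?_
          rw [Real.norm_eq_abs, abs_mul]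
          exact mul_le_of_le_one_left (abs_nonneg _) (hb i)
      _ ≤ ∑' i, |f (x i)| := (hx f).sum_le_tsum _ (fun i _ => abs_nonneg _)
  obtain ⟨C, hC⟩ := banach_steinhaus hbdd
  have key : ∀ (b : ℕ → ℝ) (k : ℕ), (∀ i, |b i| ≤ 1) →
      ‖∑ i ∈ Finset.range k, b i • x i‖ ≤ max C 0 := by
    intro b k hb
    have h2 : ‖∑ i ∈ Finset.range k, b i • x i‖ = ‖g (⟨b, hb⟩, k)‖ := by
      have := (NormedSpace.inclusionInDoubleDualLi ℝ (E := X)).norm_map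
        (∑ i ∈ Finset.range k, b i • x i)
      exact this.symm
    rw [h2]
    exact le_trans (hC _) (le_max_left _ _)
  refine ⟨max C 0, le_max_right _ _, fun b k C' hC' hbC' => ?_⟩
  rcases eq_or_lt_of_le hC' with h0 | h0
  · have hb0 : ∀ i, b i = 0 := fun i =>
      abs_nonpos_iff.1 (h0 ▸ hbC' i)
    simp [hb0, ← h0]
  · have hb1 : ∀ i, |C'⁻¹ * b i| ≤ 1 := by
      intro i
      rw [abs_mul, abs_inv, abs_of_pos h0]
      rw [inv_mul_le_iff₀ h0, mul_one]
      exact hbC' i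
    have h3 : ∑ i ∈ Finset.range k, b i • x i
        = C' • ∑ i ∈ Finset.range k, (C'⁻¹ * b i) • x i := by
      rw [Finset.smul_sum]
      refine Finset.sum_congr rfl fun i _ => ?_
      rw [smul_smul, ← mul_assoc, mul_inv_cancel₀ h0.ne', one_mul]
    rw [h3, norm_smul, Real.norm_eq_abs, abs_of_pos h0, mul_comm]
    exact mul_le_mul_of_nonneg_right (key _ k hb1) h0.le

end Aux

set_option maxHeartbeats 1000000 in
set_option synthInstance.maxHeartbeats 400000 in
/-- A normed space is complete iff the `S_θ`-summability space of every wuC series is complete. -/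
theorem completeSpace_iff_sthetaSummabilitySpace_complete {X : Type*} [NormedAddCommGroup X]
    [NormedSpace ℝ X] (θ : ℕ → ℕ) (hθ : IsLacunary θ) :
    CompleteSpace X ↔
      ∀ x : ℕ → X, WUCSeries x → IsComplete (SthetaSummabilitySpace θ x) := by
  constructor
  · intro hcomp x hx
    haveI := hcomp
    obtain ⟨H, hH0, hHb⟩ := wuc_bound hx
    have hclosed : IsClosed (SthetaSummabilitySpace θ x) := by
      refine IsSeqClosed.isClosed ?_
      intro A a hA ha
      choose L hL using hA
      set P : ℕ → X := fun k => ∑ i ∈ Finset.range k, a i • x i with hP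
      set Pn : ℕ → ℕ → X := fun n k => ∑ i ∈ Finset.range k, (A n) i • x i with hPn
      have keydiff : ∀ (u v : lp (fun _ : ℕ => ℝ) ⊤) (k : ℕ),
          ‖(∑ i ∈ Finset.range k, u i • x i) - ∑ i ∈ Finset.range k, v i • x i‖
            ≤ H * ‖u - v‖ := by
        intro u v k
        have h1 : (∑ i ∈ Finset.range k, u i • x i) - ∑ i ∈ Finset.range k, v i • x i
            = ∑ i ∈ Finset.range k, (u i - v i) • x i := by
          rw [← Finset.sum_sub_distrib]
          exact Finset.sum_congr rfl fun i _ => (sub_smul _ _ _).symm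
        rw [h1]
        refine hHb _ k ‖u - v‖ (norm_nonneg _) fun i => ?_
        have h2 : u i - v i = (u - v) i := by
          rw [lp.coeFn_sub]; rfl
        rw [h2, ← Real.norm_eq_abs]
        exact lp.norm_apply_le_norm ENNReal.top_ne_zero (u - v) i
      have hLC : CauchySeq L := by
        rw [Metric.cauchySeq_iff]
        intro ε hε
        have hAC := ha.cauchySeq
        obtain ⟨N, hN⟩ := Metric.cauchySeq_iff.1 hAC (ε/(3*(H+1))) (by positivity)
        refine ⟨N, fun m hm n hn => ?_⟩
        obtain ⟨k, -, hk1, hk2⟩ := exists_good hθ _ _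
          (hL m (ε/3) (by positivity)) (hL n (ε/3) (by positivity)) 0
        push_neg at hk1 hk2
        have hd : ‖Pn m k - Pn n k‖ ≤ H * ‖A m - A n‖ := keydiff _ _ k
        have hAd : ‖A m - A n‖ < ε/(3*(H+1)) := by
          rw [← dist_eq_norm]; exact hN m hm n hn
        have hHd : H * ‖A m - A n‖ < ε/3 := by
          rcases eq_or_lt_of_le hH0 with h | h
          · rw [← h]; simpa using by positivity
          · have : H * ‖A m - A n‖ < H * (ε/(3*(H+1))) :=
              (mul_lt_mul_iff_right₀ h).2 hAd
            have h2 : H * (ε/(3*(H+1))) ≤ ε/3 := by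
              rw [mul_div_assoc', div_le_div_iff₀ (by positivity : (0:ℝ) < 3*(H+1))
                (by norm_num : (0:ℝ) < 3)]
              nlinarith
            linarith
        calc dist (L m) (L n)
            ≤ dist (L m) (Pn m k) + dist (Pn m k) (Pn n k) + dist (Pn n k) (L n) :=
              dist_triangle4 _ _ _ _
          _ < ε/3 + ε/3 + ε/3 := by
              refine add_lt_add (add_lt_add ?_ ?_) ?_
              · rw [dist_eq_norm, norm_sub_rev]; exact hk1
              · rw [dist_eq_norm]; exact lt_of_le_of_lt hd hHd
              · rw [dist_eq_norm]; exact hk2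
          _ = ε := by ring
      obtain ⟨Linf, hLinf⟩ := cauchySeq_tendsto_of_complete hLC
      refine ⟨Linf, fun ε hε => ?_⟩
      have h1 : Tendsto (fun n => H * ‖A n - a‖) atTop (nhds 0) := by
        have h2 : Tendsto (fun n => ‖A n - a‖) atTop (nhds 0) :=
          (tendsto_iff_norm_sub_tendsto_zero).1 ha
        simpa using h2.const_mul H
      have h3 : Tendsto (fun n => ‖L n - Linf‖) atTop (nhds 0) :=
        (tendsto_iff_norm_sub_tendsto_zero).1 hLinf
      obtain ⟨n, hn1, hn2⟩ : ∃ n, H * ‖A n - a‖ < ε/4 ∧ ‖L n - Linf‖ < ε/4 :=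
        ((h1.eventually (gt_mem_nhds (by positivity : (0:ℝ) < ε/4))).and
          (h3.eventually (gt_mem_nhds (by positivity : (0:ℝ) < ε/4)))).exists
      have hsub : ∀ r, (Finset.Ioc (θ r) (θ (r + 1))).filter (fun k => ε ≤ ‖P k - Linf‖)
          ⊆ (Finset.Ioc (θ r) (θ (r + 1))).filter (fun k => ε/2 ≤ ‖Pn n k - L n‖) := by
        intro r k hk
        rw [Finset.mem_filter] at hk ⊢
        refine ⟨hk.1, ?_⟩
        have ht : P k - Linf = (P k - Pn n k) + (Pn n k - L n) + (L n - Linf) := by abel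
        have htri : ‖P k - Linf‖ ≤ ‖P k - Pn n k‖ + ‖Pn n k - L n‖ + ‖L n - Linf‖ := by
          rw [ht]
          exact le_trans (norm_add_le _ _) (add_le_add_left (norm_add_le _ _) _)
        have hb1 : ‖P k - Pn n k‖ ≤ H * ‖a - A n‖ := keydiff a (A n) k
        have hb1' : H * ‖a - A n‖ < ε/4 := by rwa [norm_sub_rev] at hn1
        have := hk.2
        linarith
      have hmain := hL n (ε/2) (by positivity)
      refine squeeze_zero (fun r => ?_) (fun r => ?_) hmain
      · have := hr_pos hθ.2.1 r
        positivity
      · have hnn : (0:ℝ) ≤ 1 / (θ (r + 1) - θ r : ℝ) := by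
          have := hr_pos hθ.2.1 r
          positivity
        exact mul_le_mul_of_nonneg_left
          (Nat.cast_le.2 (Finset.card_le_card (hsub r))) hnn
    exact hclosed.isComplete
  · intro hyp
    refine Metric.complete_of_convergent_controlled_sequences (fun n => (1/8)^n)
      (fun n => by positivity) ?_
    intro u hu
    set z : ℕ → X := fun i => u (i+1) - u i with hz
    have hzb : ∀ i, ‖z i‖ < (1/8:ℝ)^i := by
      intro i
      have := hu i (i+1) i (Nat.le_succ i) le_rfl
      rwa [dist_eq_norm] at this
    set x : ℕ → X := fun i => ((2:ℝ)^i) • z i with hx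
    have hxb : ∀ i, ‖x i‖ ≤ (1/4:ℝ)^i := by
      intro i
      rw [hx]
      rw [norm_smul, Real.norm_eq_abs, abs_of_pos (by positivity : (0:ℝ) < 2^i)]
      calc (2:ℝ)^i * ‖z i‖ ≤ (2:ℝ)^i * (1/8:ℝ)^i :=
          mul_le_mul_of_nonneg_left (hzb i).le (by positivity)
        _ = (1/4:ℝ)^i := by
          rw [← mul_pow]; norm_num
    have hwuc : WUCSeries x := by
      intro f
      refine Summable.of_nonneg_of_le (fun i => abs_nonneg _) (fun i => ?_)
        ((summable_geometric_of_lt_one (by norm_num : (0:ℝ) ≤ 1/4)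
          (by norm_num : (1/4:ℝ) < 1)).mul_left ‖f‖)
      calc |f (x i)| = ‖f (x i)‖ := (Real.norm_eq_abs _).symm
        _ ≤ ‖f‖ * ‖x i‖ := f.le_opNorm _
        _ ≤ ‖f‖ * (1/4:ℝ)^i := mul_le_mul_of_nonneg_left (hxb i) (norm_nonneg f)
    have hcompl := hyp x hwuc
    have hmem : Memℓp (fun i : ℕ => ((1/2):ℝ)^i) (⊤ : ENNReal) := by
      apply memℓp_infty
      refine ⟨1, ?_⟩
      rintro - ⟨i, rfl⟩
      show ‖((1/2:ℝ))^i‖ ≤ 1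
      rw [Real.norm_eq_abs, abs_of_pos (by positivity)]
      exact pow_le_one₀ (by norm_num) (by norm_num)
    set a : lp (fun _ : ℕ => ℝ) ⊤ := ⟨_, hmem⟩ with ha
    have hmemT : ∀ n, Memℓp (fun i : ℕ => if i < n then ((1/2):ℝ)^i else 0) (⊤ : ENNReal) := by
      intro n
      apply memℓp_infty
      refine ⟨1, ?_⟩
      rintro - ⟨i, rfl⟩
      show ‖if i < n then ((1/2):ℝ)^i else 0‖ ≤ 1
      by_cases h : i < n
      · rw [if_pos h, Real.norm_eq_abs, abs_of_pos (by positivity)]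
        exact pow_le_one₀ (by norm_num) (by norm_num)
      · simp [h]
    set A : ℕ → lp (fun _ : ℕ => ℝ) ⊤ := fun n => ⟨_, hmemT n⟩ with hA
    have hAS : ∀ n, A n ∈ SthetaSummabilitySpace θ x := by
      intro n
      refine ⟨∑ i ∈ Finset.range n, ((1/2:ℝ)^i) • x i, stheta_of_eventually_eq hθ ?_⟩
      filter_upwards [eventually_ge_atTop n] with k hk
      have : ∀ i : ℕ, (A n) i • x i = if i < n then ((1/2:ℝ)^i) • x i else 0 := by
        intro i
        show (if i < n then ((1/2):ℝ)^i else 0) • x i = _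
        by_cases h : i < n <;> simp [h]
      calc ∑ i ∈ Finset.range k, (A n) i • x i
          = ∑ i ∈ Finset.range k, (if i < n then ((1/2:ℝ)^i) • x i else 0) :=
            Finset.sum_congr rfl fun i _ => this i
        _ = ∑ i ∈ (Finset.range k).filter (fun i => i < n), ((1/2:ℝ)^i) • x i :=
            (Finset.sum_filter _ _).symm
        _ = ∑ i ∈ Finset.range n, ((1/2:ℝ)^i) • x i := by
            congr 1
            ext i
            simp only [Finset.mem_filter, Finset.mem_range]
            omega
    have hconv : Tendsto A atTop (nhds a) := by
      rw [tendsto_iff_norm_sub_tendsto_zero]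
      refine squeeze_zero (g := fun n : ℕ => ((1/2:ℝ))^n) (fun n => norm_nonneg _)
        (fun n => ?_) ?_
      · refine lp.norm_le_of_forall_le (by positivity : (0:ℝ) ≤ (1/2)^n) fun i => ?_
        have hcoe : (A n - a) i = (A n) i - a i := by rw [lp.coeFn_sub]; rfl
        rw [hcoe]
        show ‖(if i < n then ((1/2):ℝ)^i else 0) - (1/2)^i‖ ≤ (1/2)^n
        by_cases h : i < n
        · simp [h]
        · push_neg at h
          rw [if_neg (not_lt.2 h), zero_sub, norm_neg, Real.norm_eq_abs,
            abs_of_pos (by positivity)]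
          exact pow_le_pow_of_le_one (by norm_num) (by norm_num) h
      · exact tendsto_pow_atTop_nhds_zero_of_lt_one (by norm_num) (by norm_num)
    have haS : a ∈ SthetaSummabilitySpace θ x :=
      hcompl.isClosed.mem_of_tendsto hconv (Eventually.of_forall hAS)
    obtain ⟨L, hLa⟩ := haS
    have hps : (fun k => ∑ i ∈ Finset.range k, a i • x i) = fun k => u k - u 0 := by
      funext k
      have h1 : ∀ i : ℕ, a i • x i = u (i+1) - u i := by
        intro i
        show ((1/2:ℝ)^i) • (((2:ℝ)^i) • z i) = _
        rw [smul_smul, ← mul_pow]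
        norm_num [hz]
      rw [Finset.sum_congr rfl (fun i _ => h1 i), Finset.sum_range_sub]
    rw [hps] at hLa
    have hucauchy : CauchySeq u := by
      rw [Metric.cauchySeq_iff]
      intro ε hε
      obtain ⟨N, hN⟩ := eventually_atTop.1
        ((tendsto_pow_atTop_nhds_zero_of_lt_one (by norm_num : (0:ℝ) ≤ 1/8)
          (by norm_num : (1/8:ℝ) < 1)).eventually (gt_mem_nhds hε))
      exact ⟨N, fun m hm n hn => lt_trans (hu N m n hm hn) (hN N le_rfl)⟩
    have hQc : CauchySeq (fun k => u k - u 0) := by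
      rw [Metric.cauchySeq_iff] at hucauchy ⊢
      intro ε hε
      obtain ⟨N, hN⟩ := hucauchy ε hε
      refine ⟨N, fun m hm n hn => ?_⟩
      rw [dist_sub_right]
      exact hN m hm n hn
    have hQt := tendsto_of_stheta_of_cauchy hθ hLa hQc
    refine ⟨L + u 0, ?_⟩
    have hfin := hQt.add_const (u 0)
    simpa using hfin
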